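/- Suppose Z ∉ span(X) and W ∉ span(X, Z), and write blp(W|Z, X) = B*Z + C*Xᵀ for the least-squares regression of W on (X, Z). Then the Z-coefficients b̂ (from the regression of Y on (X,Z)) and β̂ (from the regression of Y on (X,Z,W)) satisfy b̂ − β̂ = B* · δ̂, where δ̂ is the W-coefficient in the regression of Y on (X,Z,W). Moreover B* = σ_{wz·x}/σ²_{z·x} and, provided σ_{y·zx} > 0 and σ_{w·zx} > 0, δ̂ = σ_{yw·zx}/σ²_{w·zx} = ρ_{yw·zx} · σ_{y·zx}/σ_{w·zx}. -/

import Mathlib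

open scoped BigOperators

/-- Weighted inner product on ℝⁿ: `(A,B) := (∑ i, wᵢ Aᵢ Bᵢ) / (∑ i, wᵢ)`. -/
noncomputable def wip {n : ℕ} (w A B : Fin n → ℝ) : ℝ :=
  (∑ i, w i * A i * B i) / (∑ i, w i)

/-- `P` is the best linear predictor (orthogonal projection with respect to the
weighted inner product `wip w`) of `A` onto the span of the collection `C`. -/
def IsBlp {n : ℕ} (w : Fin n → ℝ) (C : Set (Fin n → ℝ)) (A P : Fin n → ℝ) : Prop :=
  P ∈ Submodule.span ℝ C ∧ ∀ v ∈ Submodule.span ℝ C, wip w (A - P) v = 0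

lemma wip_comm {n : ℕ} (w A B : Fin n → ℝ) : wip w A B = wip w B A := by
  unfold wip; congr 1; exact Finset.sum_congr rfl fun i _ => by ring

lemma wip_sub_left {n : ℕ} (w A B C : Fin n → ℝ) :
    wip w (A - B) C = wip w A C - wip w B C := by
  simp only [wip, Pi.sub_apply]
  rw [← sub_div, ← Finset.sum_sub_distrib]
  congr 1
  exact Finset.sum_congr rfl fun i _ => by ring

lemma wip_smul_left {n : ℕ} (c : ℝ) (w A B : Fin n → ℝ) :
    wip w (c • A) B = c * wip w A B := by
  simp only [wip, Pi.smul_apply, smul_eq_mul]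
  rw [← mul_div_assoc]
  congr 1
  rw [Finset.mul_sum]
  exact Finset.sum_congr rfl fun i _ => by ring

lemma wip_self_pos {n : ℕ} {w v : Fin n → ℝ} (hw : ∀ i, 0 < w i) (hv : v ≠ 0) :
    0 < wip w v v := by
  obtain ⟨i, hi⟩ := Function.ne_iff.mp hv
  have hne : Nonempty (Fin n) := ⟨i⟩
  apply div_pos
  · apply Finset.sum_pos'
    · intro j _
      have h : w j * v j * v j = w j * (v j * v j) := by ring
      rw [h]
      exact mul_nonneg (hw j).le (mul_self_nonneg _)
    · refine ⟨i, Finset.mem_univ i, ?_⟩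
      have h : w i * v i * v i = w i * (v i * v i) := by ring
      rw [h]
      exact mul_pos (hw i) (mul_self_pos.mpr hi)
  · exact Finset.sum_pos (fun j _ => hw j) Finset.univ_nonempty

/-- if `Z ∉ span(X)` and `W ∉ span(X,Z)`, and
`blp(W|Z,X) = B*Z + C*Xᵀ`, then `b̂ − β̂ = B* · δ̂`; moreover
`B* = σ_{wz·x}/σ²_{z·x}` and, provided `σ_{y·zx} > 0` and `σ_{w·zx} > 0`,
`δ̂ = σ_{yw·zx}/σ²_{w·zx} = ρ_{yw·zx} · σ_{y·zx}/σ_{w·zx}`. -/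
theorem stmt3 {n : ℕ} (w : Fin n → ℝ) (hw : ∀ i, 0 < w i)
    (X : Set (Fin n → ℝ)) (hXfin : X.Finite)
    (h1 : (fun _ => (1 : ℝ)) ∈ Submodule.span ℝ X)
    (Y Z W : Fin n → ℝ)
    (hZ : Z ∉ Submodule.span ℝ X)
    (hW : W ∉ Submodule.span ℝ (insert Z X))
    (Pzx Pwx Pyzx Pwzx Pyzxw : Fin n → ℝ)
    (hPzx : IsBlp w X Z Pzx)
    (hPwx : IsBlp w X W Pwx)
    (hPyzx : IsBlp w (insert Z X) Y Pyzx)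
    (hPwzx : IsBlp w (insert Z X) W Pwzx)
    (hPyzxw : IsBlp w (insert Z (insert W X)) Y Pyzxw)
    (Bstar bhat betahat deltahat : ℝ)
    (hBstar : Pwzx - Bstar • Z ∈ Submodule.span ℝ X)
    (hb : Pyzx - bhat • Z ∈ Submodule.span ℝ X)
    (hbeta : Pyzxw - betahat • Z - deltahat • W ∈ Submodule.span ℝ X) :
    bhat - betahat = Bstar * deltahat ∧
    Bstar = wip w (W - Pwx) (Z - Pzx) / wip w (Z - Pzx) (Z - Pzx) ∧
    (0 < wip w (Y - Pyzx) (Y - Pyzx) → 0 < wip w (W - Pwzx) (W - Pwzx) →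
      deltahat = wip w (Y - Pyzx) (W - Pwzx) / wip w (W - Pwzx) (W - Pwzx) ∧
      deltahat =
        (wip w (Y - Pyzx) (W - Pwzx) /
            (Real.sqrt (wip w (Y - Pyzx) (Y - Pyzx)) *
              Real.sqrt (wip w (W - Pwzx) (W - Pwzx)))) *
          Real.sqrt (wip w (Y - Pyzx) (Y - Pyzx)) /
          Real.sqrt (wip w (W - Pwzx) (W - Pwzx))) := by
  classical
  have hXZ : Submodule.span ℝ X ≤ Submodule.span ℝ (insert Z X) :=
    Submodule.span_mono (Set.subset_insert _ _)
  have hZW : Submodule.span ℝ (insert Z X) ≤ Submodule.span ℝ (insert Z (insert W X)) :=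
    Submodule.span_mono (Set.insert_subset_insert (Set.subset_insert _ _))
  have hZmem : Z ∈ Submodule.span ℝ (insert Z X) :=
    Submodule.subset_span (Set.mem_insert _ _)
  have hWmem : W ∈ Submodule.span ℝ (insert Z (insert W X)) :=
    Submodule.subset_span (Set.mem_insert_of_mem _ (Set.mem_insert _ _))
  have hemem : Z - Pzx ∈ Submodule.span ℝ (insert Z X) :=
    Submodule.sub_mem _ hZmem (hXZ hPzx.1)
  have hfmem : W - Pwzx ∈ Submodule.span ℝ (insert Z (insert W X)) :=
    Submodule.sub_mem _ hWmem (hZW hPwzx.1)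
  have hene : Z - Pzx ≠ 0 := by
    intro h
    rw [sub_eq_zero] at h
    exact hZ (h ▸ hPzx.1)
  have hs : 0 < wip w (Z - Pzx) (Z - Pzx) := wip_self_pos hw hene
  -- orthogonality of e := Z - Pzx to span X, right-argument form
  have hoX : ∀ v ∈ Submodule.span ℝ X, wip w v (Z - Pzx) = 0 := fun v hv => by
    rw [wip_comm]; exact hPzx.2 v hv
  -- wip Z e = wip e e
  have hZe : wip w Z (Z - Pzx) = wip w (Z - Pzx) (Z - Pzx) := by
    have h := wip_sub_left w Z Pzx (Z - Pzx)
    rw [hoX Pzx hPzx.1] at h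
    linarith
  -- wip W e = Bstar * wip e e
  have hWe : wip w W (Z - Pzx) = Bstar * wip w (Z - Pzx) (Z - Pzx) := by
    have h1' := hPwzx.2 _ hemem
    rw [wip_sub_left] at h1'
    have h2' := hoX _ hBstar
    rw [wip_sub_left, wip_smul_left, hZe] at h2'
    linarith
  -- wip Y e = bhat * wip e e
  have hYe1 : wip w Y (Z - Pzx) = bhat * wip w (Z - Pzx) (Z - Pzx) := by
    have h1' := hPyzx.2 _ hemem
    rw [wip_sub_left] at h1'
    have h2' := hoX _ hb
    rw [wip_sub_left, wip_smul_left, hZe] at h2'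
    linarith
  -- wip Y e = (betahat + deltahat * Bstar) * wip e e
  have hYe2 : wip w Y (Z - Pzx)
      = betahat * wip w (Z - Pzx) (Z - Pzx) + deltahat * (Bstar * wip w (Z - Pzx) (Z - Pzx)) := by
    have h1' := hPyzxw.2 _ (hZW hemem)
    rw [wip_sub_left] at h1'
    have h2' := hoX _ hbeta
    rw [wip_sub_left, wip_sub_left, wip_smul_left, wip_smul_left, hZe, hWe] at h2'
    linarith
  refine ⟨?_, ?_, ?_⟩
  · -- bhat - betahat = Bstar * deltahat
    have key : (bhat - betahat) * wip w (Z - Pzx) (Z - Pzx)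
        = (Bstar * deltahat) * wip w (Z - Pzx) (Z - Pzx) := by linear_combination hYe2 - hYe1
    exact mul_right_cancel₀ hs.ne' key
  · -- Bstar formula
    have h3' := hoX _ hPwx.1
    rw [wip_sub_left, h3', sub_zero, hWe, mul_div_assoc, div_self hs.ne', mul_one]
  · intro hp hq
    -- orthogonality of f := W - Pwzx to span (insert Z X), right-argument form
    have hoZX : ∀ v ∈ Submodule.span ℝ (insert Z X), wip w v (W - Pwzx) = 0 := fun v hv => by
      rw [wip_comm]; exact hPwzx.2 v hv
    have hWf : wip w W (W - Pwzx) = wip w (W - Pwzx) (W - Pwzx) := by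
      have h := wip_sub_left w W Pwzx (W - Pwzx)
      rw [hoZX Pwzx hPwzx.1] at h
      linarith
    have hYf : wip w Y (W - Pwzx) = deltahat * wip w (W - Pwzx) (W - Pwzx) := by
      have h1' := hPyzxw.2 _ hfmem
      rw [wip_sub_left] at h1'
      have h2' := hoZX _ (hXZ hbeta)
      rw [wip_sub_left, wip_sub_left, wip_smul_left, wip_smul_left, hoZX Z hZmem, hWf] at h2'
      linarith
    have hc : wip w (Y - Pyzx) (W - Pwzx) = deltahat * wip w (W - Pwzx) (W - Pwzx) := by
      rw [wip_sub_left, hoZX Pyzx hPyzx.1, sub_zero, hYf]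
    constructor
    · rw [hc, mul_div_assoc, div_self hq.ne', mul_one]
    · have hsp : Real.sqrt (wip w (Y - Pyzx) (Y - Pyzx)) ≠ 0 := (Real.sqrt_pos.mpr hp).ne'
      have hsq : Real.sqrt (wip w (W - Pwzx) (W - Pwzx)) ≠ 0 := (Real.sqrt_pos.mpr hq).ne'
      have hqq : Real.sqrt (wip w (W - Pwzx) (W - Pwzx)) * Real.sqrt (wip w (W - Pwzx) (W - Pwzx))
          = wip w (W - Pwzx) (W - Pwzx) := Real.mul_self_sqrt hq.le
      rw [hc]
      field_simp
      linear_combination deltahat * hqq
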